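/- Let b : ℕ² → ℂ be bounded and suppose that c := lim_{N→∞} 𝔼_{1≤m,n≤N, gcd(m,n)=1} b(dm, dn) exists for every d ≥ 1 with values c_d satisfying |c_d| ≤ sup|b|. Then lim_{N→∞} 𝔼_{1≤m,n≤N} b(m,n) exists and equals (6/π²) ∑_{d=1}^∞ c_d/d². -/

import Mathlib

open Filter Finset Real Topology

namespace Stmt19Aux

open ArithmeticFunction
open scoped ArithmeticFunction.Moebius

lemma aux_moebius_sum {n : ℕ} (hn : n ≠ 0) :
    (∑ d ∈ n.divisors, (μ d : ℤ)) = if n = 1 then 1 else 0 := by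
  have h1 := congrArg (fun f : ArithmeticFunction ℤ => f n) ArithmeticFunction.moebius_mul_coe_zeta
  simp only [ArithmeticFunction.mul_apply, ArithmeticFunction.one_apply] at h1
  rw [← h1, ← Nat.sum_divisorsAntidiagonal (fun a _ => (μ a : ℤ))]
  refine Finset.sum_congr rfl fun p hp => ?_
  have hp2 : p.2 ≠ 0 := by
    rcases (Nat.mem_divisorsAntidiagonal.mp hp) with ⟨he, h0⟩
    intro h; rw [h, mul_zero] at he; exact h0 he.symm
  simp [ArithmeticFunction.natCoe_apply, ArithmeticFunction.zeta_apply, hp2]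

lemma aux_card_dvd (N d : ℕ) : ((Finset.Icc 1 N).filter (fun m => d ∣ m)).card = N / d := by
  rw [show Finset.Icc 1 N = Finset.Ioc 0 N from Finset.Icc_add_one_left_eq_Ioc 0 N]
  exact Nat.Ioc_filter_dvd_card_eq_div N d

lemma aux_C_eq (N : ℕ) :
    ((((Finset.Icc 1 N ×ˢ Finset.Icc 1 N).filter (fun p => Nat.gcd p.1 p.2 = 1)).card : ℤ)) =
      ∑ d ∈ Finset.Icc 1 N, μ d * ((N / d : ℕ) : ℤ) ^ 2 := by
  rw [Finset.card_filter]
  simp only [Nat.cast_sum, Nat.cast_ite, Nat.cast_one, Nat.cast_zero]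
  have step1 : ∀ p ∈ Finset.Icc 1 N ×ˢ Finset.Icc 1 N,
      (if Nat.gcd p.1 p.2 = 1 then (1:ℤ) else 0) =
        ∑ e ∈ Finset.Icc 1 N, (if e ∣ p.1 ∧ e ∣ p.2 then (μ e : ℤ) else 0) := by
    intro p hp
    rw [Finset.mem_product, Finset.mem_Icc, Finset.mem_Icc] at hp
    have hp1 : p.1 ≠ 0 := by omega
    have hg : Nat.gcd p.1 p.2 ≠ 0 := fun hg => hp1 (Nat.eq_zero_of_gcd_eq_zero_left hg)
    rw [← aux_moebius_sum hg, ← Finset.sum_filter]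
    congr 1
    ext e
    simp only [Nat.mem_divisors, Finset.mem_filter, Finset.mem_Icc, Nat.dvd_gcd_iff]
    constructor
    · rintro ⟨⟨h1, h2⟩, -⟩
      refine ⟨⟨Nat.one_le_iff_ne_zero.mpr fun h0 => hp1 (by simpa [h0] using h1),
        le_trans (Nat.le_of_dvd (by omega) h1) hp.1.2⟩, h1, h2⟩
    · rintro ⟨-, h1, h2⟩
      exact ⟨⟨h1, h2⟩, hg⟩
  rw [Finset.sum_congr rfl step1, Finset.sum_comm]
  refine Finset.sum_congr rfl fun e he => ?_
  rw [← Finset.sum_filter, Finset.sum_const,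
    Finset.filter_product (fun m => e ∣ m) (fun m => e ∣ m), Finset.card_product,
    aux_card_dvd N e]
  simp only [nsmul_eq_mul, Nat.cast_mul]
  ring

lemma aux_div_tendsto {d : ℕ} (hd : 1 ≤ d) :
    Tendsto (fun N : ℕ => ((N / d : ℕ) : ℝ) / (N : ℝ)) atTop (𝓝 (1 / d)) := by
  have hd' : (d : ℝ) ≠ 0 := Nat.cast_ne_zero.mpr (by omega)
  have hmod : Tendsto (fun N : ℕ => ((N % d : ℕ) : ℝ) / (N : ℝ)) atTop (𝓝 0) := by
    refine tendsto_of_tendsto_of_tendsto_of_le_of_le tendsto_const_nhds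
      (tendsto_const_div_atTop_nhds_zero_nat (d : ℝ)) (fun N => by positivity) (fun N => ?_)
    have : ((N % d : ℕ) : ℝ) ≤ (d : ℝ) := by exact_mod_cast (Nat.mod_lt N (by omega)).le
    rcases Nat.eq_zero_or_pos N with rfl | hN
    · simp
    · have hNpos : (0 : ℝ) < N := by exact_mod_cast hN
      gcongr
  have key : Tendsto (fun N : ℕ => (1 - ((N % d : ℕ) : ℝ) / N) / d) atTop (𝓝 (1 / d)) := by
    have := ((tendsto_const_nhds (x := (1:ℝ))).sub hmod).div_const (d : ℝ)
    simpa using this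
  refine key.congr' ?_
  filter_upwards [eventually_ge_atTop 1] with N hN
  have hN' : (N : ℝ) ≠ 0 := Nat.cast_ne_zero.mpr (by omega)
  have hdm : (d : ℝ) * ((N / d : ℕ) : ℝ) + ((N % d : ℕ) : ℝ) = N := by
    exact_mod_cast congrArg (Nat.cast : ℕ → ℝ) (Nat.div_add_mod N d)
  field_simp
  linear_combination (-1 : ℝ) * hdm

lemma aux_mu_tsum : ∑' n : ℕ, (μ n : ℝ) / (n : ℝ) ^ 2 = 6 / π ^ 2 := by
  have h2 : (1 : ℝ) < (2 : ℂ).re := by norm_num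
  have hz := ArithmeticFunction.LSeries_zeta_mul_Lseries_moebius (s := 2) h2
  rw [ArithmeticFunction.LSeries_zeta_eq_riemannZeta h2, riemannZeta_two] at hz
  have hπ : (π : ℂ) ≠ 0 := Complex.ofReal_ne_zero.mpr Real.pi_ne_zero
  have hL : LSeries (fun n => (μ n : ℂ)) 2 = 6 / (π : ℂ) ^ 2 := by
    field_simp at hz ⊢
    linear_combination hz
  have hterm : ∀ n : ℕ, LSeries.term (fun n => (μ n : ℂ)) 2 n = ((μ n : ℝ) / (n : ℝ) ^ 2 : ℝ) := by
    intro n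
    rcases eq_or_ne n 0 with rfl | hn
    · simp [LSeries.term]
    · rw [LSeries.term_of_ne_zero hn]
      rw [show (2 : ℂ) = ((2 : ℕ) : ℂ) by norm_num, Complex.cpow_natCast]
      push_cast
      ring
  have : LSeries (fun n => (μ n : ℂ)) 2 = ((∑' n : ℕ, (μ n : ℝ) / (n : ℝ) ^ 2 : ℝ) : ℂ) := by
    rw [LSeries, Complex.ofReal_tsum]
    exact tsum_congr hterm
  rw [this] at hL
  have h6 : ((∑' n : ℕ, (μ n : ℝ) / (n : ℝ) ^ 2 : ℝ) : ℂ) = ((6 / π ^ 2 : ℝ) : ℂ) := by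
    rw [hL]; push_cast; ring
  exact_mod_cast h6

lemma aux_density :
    Tendsto (fun N : ℕ =>
      ((((Finset.Icc 1 N ×ˢ Finset.Icc 1 N).filter (fun p => Nat.gcd p.1 p.2 = 1)).card : ℝ))
        / (N : ℝ) ^ 2) atTop (𝓝 (6 / π ^ 2)) := by
  have hsum : Summable (fun d : ℕ => 1 / (d : ℝ) ^ 2) :=
    summable_one_div_nat_pow.mpr one_lt_two
  set f : ℕ → ℕ → ℝ := fun N d =>
    if d ∈ Finset.Icc 1 N then (μ d : ℝ) * ((N / d : ℕ) : ℝ) ^ 2 / (N : ℝ) ^ 2 else 0 with hf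
  have key : Tendsto (fun N : ℕ => ∑' d, f N d) atTop
      (𝓝 (∑' d : ℕ, (μ d : ℝ) / (d : ℝ) ^ 2)) := by
    refine tendsto_tsum_of_dominated_convergence hsum (fun d => ?_) ?_
    · rcases Nat.eq_zero_or_pos d with rfl | hd
      · simpa [hf] using tendsto_const_nhds.congr' (by
          filter_upwards [eventually_ge_atTop 1] with N hN
          simp [hf])
      · have h1 : Tendsto (fun N : ℕ => (μ d : ℝ) * (((N / d : ℕ) : ℝ) / (N : ℝ)) ^ 2)
            atTop (𝓝 ((μ d : ℝ) * (1 / d) ^ 2)) :=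
          tendsto_const_nhds.mul ((aux_div_tendsto hd).pow 2)
        have h2 : (μ d : ℝ) * (1 / d : ℝ) ^ 2 = (μ d : ℝ) / (d : ℝ) ^ 2 := by ring
        rw [← h2]
        refine h1.congr' ?_
        filter_upwards [eventually_ge_atTop d] with N hN
        have hdN : d ∈ Finset.Icc 1 N := Finset.mem_Icc.mpr ⟨hd, hN⟩
        have hN' : (N : ℝ) ≠ 0 := Nat.cast_ne_zero.mpr (by omega)
        simp only [hf, hdN, if_pos]
        field_simp
    · refine Eventually.of_forall fun N => fun d => ?_
      by_cases hd : d ∈ Finset.Icc 1 N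
      · simp only [hf, if_pos hd]
        rw [Finset.mem_Icc] at hd
        have hd0 : (0 : ℝ) < d := by exact_mod_cast hd.1
        have hN0 : (0 : ℝ) < N := by exact_mod_cast lt_of_lt_of_le hd.1 hd.2
        have hmd : ((N / d : ℕ) : ℝ) * d ≤ N := by exact_mod_cast Nat.div_mul_le_self N d
        have hX : (0 : ℝ) ≤ ((N / d : ℕ) : ℝ) := Nat.cast_nonneg _
        have hq : ((N / d : ℕ) : ℝ) ^ 2 * (d : ℝ) ^ 2 ≤ (N : ℝ) ^ 2 := by
          nlinarith [mul_self_le_mul_self (by positivity : (0:ℝ) ≤ ((N / d : ℕ) : ℝ) * d) hmd]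
        have hμ : |(μ d : ℝ)| ≤ 1 := by exact_mod_cast ArithmeticFunction.abs_moebius_le_one
        rw [Real.norm_eq_abs, abs_div, abs_mul,
          abs_of_nonneg (by positivity : (0:ℝ) ≤ ((N / d : ℕ) : ℝ) ^ 2),
          abs_of_nonneg (by positivity : (0:ℝ) ≤ (N : ℝ) ^ 2),
          div_le_div_iff₀ (by positivity) (by positivity)]
        nlinarith [mul_le_mul_of_nonneg_right hμ
          (by positivity : (0:ℝ) ≤ ((N / d : ℕ) : ℝ) ^ 2 * (d : ℝ) ^ 2)]
      · simp only [hf, if_neg hd, norm_zero]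
        positivity
  rw [aux_mu_tsum] at key
  refine key.congr fun N => ?_
  rw [tsum_eq_sum (s := Finset.Icc 1 N) (fun d hd => by simp only [hf, if_neg hd])]
  have hC := aux_C_eq N
  have hCR := congrArg (Int.cast : ℤ → ℝ) hC
  simp only [Int.cast_sum, Int.cast_mul, Int.cast_pow, Int.cast_natCast] at hCR
  rw [hCR, Finset.sum_div]
  exact Finset.sum_congr rfl fun d hd => by simp only [hf, if_pos hd]

lemma aux_decomp (b : ℕ × ℕ → ℂ) (N : ℕ) :
    ∑ m ∈ Finset.Icc 1 N, ∑ n ∈ Finset.Icc 1 N, b (m, n)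
      = ∑ d ∈ Finset.Icc 1 N,
          ∑ p ∈ (Finset.Icc 1 (N / d) ×ˢ Finset.Icc 1 (N / d)).filter
              (fun p => Nat.gcd p.1 p.2 = 1),
            b (d * p.1, d * p.2) := by
  have hmaps : ∀ p ∈ Finset.Icc 1 N ×ˢ Finset.Icc 1 N,
      Nat.gcd p.1 p.2 ∈ Finset.Icc 1 N := by
    intro p hp
    rw [Finset.mem_product, Finset.mem_Icc, Finset.mem_Icc] at hp
    rw [Finset.mem_Icc]
    constructor
    · have : p.1 ≠ 0 := by omega
      exact Nat.pos_of_ne_zero fun hg => this (Nat.eq_zero_of_gcd_eq_zero_left hg)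
    · exact le_trans (Nat.gcd_le_left _ (by omega)) hp.1.2
  rw [← Finset.sum_product' (f := fun m n => b (m, n))]
  rw [← Finset.sum_fiberwise_of_maps_to hmaps (fun p => b p)]
  refine Finset.sum_congr rfl fun d hd => ?_
  rw [Finset.mem_Icc] at hd
  have hd1 : 1 ≤ d := hd.1
  refine Finset.sum_nbij' (fun p => (p.1 / d, p.2 / d)) (fun q => (d * q.1, d * q.2))
    ?_ ?_ ?_ ?_ ?_
  · intro p hp
    simp only [Finset.mem_filter, Finset.mem_product, Finset.mem_Icc] at hp ⊢
    obtain ⟨⟨⟨h11, h12⟩, h21, h22⟩, hg⟩ := hp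
    have hdvd1 : d ∣ p.1 := hg ▸ Nat.gcd_dvd_left _ _
    have hdvd2 : d ∣ p.2 := hg ▸ Nat.gcd_dvd_right _ _
    refine ⟨⟨⟨?_, Nat.div_le_div_right h12⟩, ?_, Nat.div_le_div_right h22⟩, ?_⟩
    · exact (Nat.one_le_div_iff (by omega)).mpr (Nat.le_of_dvd (by omega) hdvd1)
    · exact (Nat.one_le_div_iff (by omega)).mpr (Nat.le_of_dvd (by omega) hdvd2)
    · have hpos : 0 < Nat.gcd p.1 p.2 := by rw [hg]; omega
      have := Nat.coprime_div_gcd_div_gcd (m := p.1) (n := p.2) hpos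
      rw [hg] at this
      exact this
  · intro q hq
    simp only [Finset.mem_filter, Finset.mem_product, Finset.mem_Icc] at hq ⊢
    obtain ⟨⟨⟨h11, h12⟩, h21, h22⟩, hg⟩ := hq
    refine ⟨⟨⟨?_, ?_⟩, ?_, ?_⟩, ?_⟩
    · exact Nat.one_le_iff_ne_zero.mpr (by positivity)
    · calc d * q.1 ≤ d * (N / d) := Nat.mul_le_mul_left d h12
        _ ≤ N := by rw [mul_comm]; exact Nat.div_mul_le_self N d
    · exact Nat.one_le_iff_ne_zero.mpr (by positivity)
    · calc d * q.2 ≤ d * (N / d) := Nat.mul_le_mul_left d h22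
        _ ≤ N := by rw [mul_comm]; exact Nat.div_mul_le_self N d
    · rw [Nat.gcd_mul_left, hg, mul_one]
  · intro p hp
    simp only [Finset.mem_filter, Finset.mem_product, Finset.mem_Icc] at hp
    obtain ⟨-, hg⟩ := hp
    have hdvd1 : d ∣ p.1 := hg ▸ Nat.gcd_dvd_left _ _
    have hdvd2 : d ∣ p.2 := hg ▸ Nat.gcd_dvd_right _ _
    ext <;> simp [Nat.mul_div_cancel' hdvd1, Nat.mul_div_cancel' hdvd2]
  · intro q hq
    ext <;> simp [Nat.mul_div_cancel_left _ (by omega : 0 < d)]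
  · intro p hp
    simp only [Finset.mem_filter, Finset.mem_product, Finset.mem_Icc] at hp
    obtain ⟨-, hg⟩ := hp
    have hdvd1 : d ∣ p.1 := hg ▸ Nat.gcd_dvd_left _ _
    have hdvd2 : d ∣ p.2 := hg ▸ Nat.gcd_dvd_right _ _
    rw [Nat.mul_div_cancel' hdvd1, Nat.mul_div_cancel' hdvd2]

end Stmt19Aux

open Stmt19Aux

theorem stmt19 (b : ℕ × ℕ → ℂ) (B : ℝ) (hb : ∀ p, ‖b p‖ ≤ B)
    (c : ℕ → ℂ) (hc : ∀ d, ‖c d‖ ≤ B)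
    (h : ∀ d : ℕ, 1 ≤ d →
      Tendsto (fun N : ℕ =>
          (∑ p ∈ (Finset.Icc 1 N ×ˢ Finset.Icc 1 N).filter (fun p => Nat.gcd p.1 p.2 = 1),
              b (d * p.1, d * p.2)) /
            (((Finset.Icc 1 N ×ˢ Finset.Icc 1 N).filter
                (fun p => Nat.gcd p.1 p.2 = 1)).card : ℂ))
        atTop (nhds (c d))) :
    Tendsto (fun N : ℕ =>
        (∑ m ∈ Finset.Icc 1 N, ∑ n ∈ Finset.Icc 1 N, b (m, n)) / (N : ℂ) ^ 2)
      atTop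
      (nhds ((6 / (Real.pi : ℂ) ^ 2) * ∑' d : ℕ, c d / (d : ℂ) ^ 2)) := by
  have hB0 : (0 : ℝ) ≤ B := le_trans (norm_nonneg _) (hb (0, 0))
  have hsum : Summable (fun d : ℕ => B / (d : ℝ) ^ 2) := by
    have := (summable_one_div_nat_pow (p := 2).mpr one_lt_two).mul_left B
    refine this.congr fun d => ?_
    rw [mul_one_div]
  set C : ℕ → ℕ := fun M =>
    ((Finset.Icc 1 M ×ˢ Finset.Icc 1 M).filter (fun p => Nat.gcd p.1 p.2 = 1)).card with hCdef
  set T : ℕ → ℕ → ℂ := fun d M =>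
    ∑ p ∈ (Finset.Icc 1 M ×ˢ Finset.Icc 1 M).filter (fun p => Nat.gcd p.1 p.2 = 1),
      b (d * p.1, d * p.2) with hTdef
  set f : ℕ → ℕ → ℂ := fun N d =>
    if d ∈ Finset.Icc 1 N then T d (N / d) / (N : ℂ) ^ 2 else 0 with hfdef
  set g : ℕ → ℂ := fun d => (6 / (Real.pi : ℂ) ^ 2) * (c d / (d : ℂ) ^ 2) with hgdef
  have key : Tendsto (fun N => ∑' d, f N d) atTop (𝓝 (∑' d, g d)) := by
    refine tendsto_tsum_of_dominated_convergence hsum (fun d => ?_) ?_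
    · rcases Nat.eq_zero_or_pos d with rfl | hd
      · have hg0 : g 0 = 0 := by simp [hgdef]
        rw [hg0]
        refine tendsto_const_nhds.congr fun N => ?_
        simp [hfdef]
      · have hM : Tendsto (fun N : ℕ => N / d) atTop atTop :=
          le_of_eq (map_div_atTop_eq_nat d hd)
        have f1 : Tendsto (fun N : ℕ => T d (N / d) / ((C (N / d) : ℂ))) atTop (𝓝 (c d)) :=
          (h d hd).comp hM
        have f2r : Tendsto (fun N : ℕ => ((C (N / d) : ℝ)) / (N : ℝ) ^ 2) atTop
            (𝓝 (6 / π ^ 2 * (1 / d) ^ 2)) := by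
          have hA : Tendsto (fun N : ℕ =>
              ((C (N / d) : ℝ) / ((N / d : ℕ) : ℝ) ^ 2)
                * (((N / d : ℕ) : ℝ) / (N : ℝ)) ^ 2) atTop
              (𝓝 (6 / π ^ 2 * (1 / d) ^ 2)) :=
            (aux_density.comp hM).mul ((aux_div_tendsto hd).pow 2)
          refine hA.congr' ?_
          filter_upwards [eventually_ge_atTop d] with N hN
          have hM1 : 1 ≤ N / d := (Nat.one_le_div_iff hd).mpr hN
          have hM0 : ((N / d : ℕ) : ℝ) ≠ 0 := Nat.cast_ne_zero.mpr (by omega)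
          have hN0 : (N : ℝ) ≠ 0 := Nat.cast_ne_zero.mpr (by omega)
          field_simp
        have f2 : Tendsto (fun N : ℕ => ((C (N / d) : ℂ)) / (N : ℂ) ^ 2) atTop
            (𝓝 (((6 / π ^ 2 * (1 / d) ^ 2 : ℝ) : ℂ))) := by
          have hcomp := (Complex.continuous_ofReal.tendsto _).comp f2r
          refine hcomp.congr fun N => ?_
          simp only [Function.comp_apply]
          push_cast
          ring
        have hprod := f1.mul f2
        have hlim : c d * ((6 / π ^ 2 * (1 / d) ^ 2 : ℝ) : ℂ) = g d := by
          simp only [hgdef]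
          push_cast
          ring
        rw [hlim] at hprod
        refine hprod.congr' ?_
        filter_upwards [eventually_ge_atTop d] with N hN
        have hM1 : 1 ≤ N / d := (Nat.one_le_div_iff hd).mpr hN
        have hC1 : 0 < C (N / d) := by
          refine Finset.card_pos.mpr ⟨(1, 1), ?_⟩
          simp [hCdef, Finset.mem_product, Finset.mem_Icc, hM1]
        have hC0 : ((C (N / d)) : ℂ) ≠ 0 := Nat.cast_ne_zero.mpr (by omega)
        have hdN : d ∈ Finset.Icc 1 N := Finset.mem_Icc.mpr ⟨hd, hN⟩
        simp only [hfdef, if_pos hdN]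
        rw [div_mul_div_comm, mul_comm ((C (N / d) : ℂ)) ((N : ℂ) ^ 2),
          mul_div_mul_right _ _ hC0]
    · refine Eventually.of_forall fun N d => ?_
      by_cases hdN : d ∈ Finset.Icc 1 N
      · simp only [hfdef, if_pos hdN]
        rw [Finset.mem_Icc] at hdN
        have hd0 : (0 : ℝ) < d := by exact_mod_cast hdN.1
        have hN0 : (0 : ℝ) < N := by exact_mod_cast lt_of_lt_of_le hdN.1 hdN.2
        have hmd : ((N / d : ℕ) : ℝ) * d ≤ N := by exact_mod_cast Nat.div_mul_le_self N d
        have hX : (0 : ℝ) ≤ ((N / d : ℕ) : ℝ) := Nat.cast_nonneg _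
        have hTb : ‖T d (N / d)‖ ≤ B * ((N / d : ℕ) : ℝ) ^ 2 := by
          refine le_trans (norm_sum_le _ _) ?_
          have hcard : (((Finset.Icc 1 (N / d) ×ˢ Finset.Icc 1 (N / d)).filter
              (fun p => Nat.gcd p.1 p.2 = 1)).card : ℝ) ≤ ((N / d : ℕ) : ℝ) ^ 2 := by
            have h1 : ((Finset.Icc 1 (N / d) ×ˢ Finset.Icc 1 (N / d)).filter
                (fun p => Nat.gcd p.1 p.2 = 1)).card ≤ (N / d) * (N / d) := by
              refine le_trans (Finset.card_filter_le _ _) ?_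
              rw [Finset.card_product, Nat.card_Icc]
              simp
            calc ((((Finset.Icc 1 (N / d) ×ˢ Finset.Icc 1 (N / d)).filter
                (fun p => Nat.gcd p.1 p.2 = 1)).card : ℝ))
                ≤ (((N / d) * (N / d) : ℕ) : ℝ) := by exact_mod_cast h1
              _ = ((N / d : ℕ) : ℝ) ^ 2 := by push_cast; ring
          calc ∑ p ∈ (Finset.Icc 1 (N / d) ×ˢ Finset.Icc 1 (N / d)).filter
                (fun p => Nat.gcd p.1 p.2 = 1), ‖b (d * p.1, d * p.2)‖
              ≤ ∑ _p ∈ (Finset.Icc 1 (N / d) ×ˢ Finset.Icc 1 (N / d)).filter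
                (fun p => Nat.gcd p.1 p.2 = 1), B :=
                Finset.sum_le_sum fun p _ => hb _
            _ = (((Finset.Icc 1 (N / d) ×ˢ Finset.Icc 1 (N / d)).filter
                (fun p => Nat.gcd p.1 p.2 = 1)).card : ℝ) * B := by
                rw [Finset.sum_const, nsmul_eq_mul]
            _ ≤ B * ((N / d : ℕ) : ℝ) ^ 2 := by nlinarith
        rw [norm_div, norm_pow, Complex.norm_natCast,
          div_le_div_iff₀ (by positivity) (by positivity)]
        nlinarith [mul_self_le_mul_self (by positivity : (0:ℝ) ≤ ((N / d : ℕ) : ℝ) * d) hmd,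
          norm_nonneg (T d (N / d))]
      · simp only [hfdef, if_neg hdN, norm_zero]
        positivity
  have hgsum : ∑' d, g d = (6 / (Real.pi : ℂ) ^ 2) * ∑' d : ℕ, c d / (d : ℂ) ^ 2 :=
    tsum_mul_left
  rw [hgsum] at key
  refine key.congr fun N => ?_
  rw [tsum_eq_sum (s := Finset.Icc 1 N) (fun d hd => by simp only [hfdef, if_neg hd])]
  rw [aux_decomp b N, Finset.sum_div]
  exact Finset.sum_congr rfl fun d hd => by simp only [hfdef, if_pos hd, hTdef]
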